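/- Let B be an n×n complex matrix and suppose that for all integers k, l with 1 ≤ k ≤ n and 2l < k, the sum over all words w : Fin k → Bool with exactly l entries equal to true of Tr(w(B,Bᴴ)) equals 0. Then the pencil L_B(t) is isospectral, i.e. the characteristic polynomial of L_B(t) is independent of t ∈ ℝ. -/

import Mathlib

open Matrix

/-- The Hermitian part `Re B = (B + Bᴴ)/2`. -/
noncomputable def reM {n : ℕ} (B : Matrix (Fin n) (Fin n) ℂ) : Matrix (Fin n) (Fin n) ℂ :=
  (1 / 2 : ℂ) • (B + Bᴴ)

/-- The skew part `Im B = (B - Bᴴ)/(2i)`. -/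
noncomputable def imM {n : ℕ} (B : Matrix (Fin n) (Fin n) ℂ) : Matrix (Fin n) (Fin n) ℂ :=
  (1 / (2 * Complex.I) : ℂ) • (B - Bᴴ)

/-- The pencil `L_B(t) = cos t ⬝ Re B + sin t ⬝ Im B = Re(e^{-it} B)`. -/
noncomputable def LB {n : ℕ} (B : Matrix (Fin n) (Fin n) ℂ) (t : ℝ) :
    Matrix (Fin n) (Fin n) ℂ :=
  (Real.cos t : ℂ) • reM B + (Real.sin t : ℂ) • imM B

/-- The pencil `L_B(t)` is isospectral: its characteristic polynomial is
independent of `t`. -/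
def Isospectral {n : ℕ} (B : Matrix (Fin n) (Fin n) ℂ) : Prop :=
  ∀ s t : ℝ, (LB B s).charpoly = (LB B t).charpoly

/-- The word `w(B, Bᴴ)`: the ordered product over `j = 0, …, k-1` of `Bᴴ` if `w j = true`
and `B` otherwise. -/
noncomputable def wordProd {n : ℕ} (B : Matrix (Fin n) (Fin n) ℂ) {k : ℕ}
    (w : Fin k → Bool) : Matrix (Fin n) (Fin n) ℂ :=
  (List.ofFn fun j => if w j then Bᴴ else B).prod

section Auxiliary

open Polynomial

lemma ofFn_reverse {α : Type*} {k : ℕ} (f : Fin k → α) :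
    (List.ofFn f).reverse = List.ofFn (fun i => f (Fin.rev i)) := by
  apply List.ext_getElem
  · simp
  · intro i h1 h2
    simp only [List.getElem_reverse, List.getElem_ofFn, List.length_ofFn] at *
    congr 1
    ext
    simp [Fin.rev]
    omega

lemma charpoly_diagonal' {m : ℕ} (d : Fin m → ℂ) :
    (Matrix.diagonal d).charpoly = ∏ i, (X - C (d i)) := by
  have : charmatrix (Matrix.diagonal d) = Matrix.diagonal (fun i => (X : ℂ[X]) - C (d i)) := by
    ext i j
    by_cases h : i = j
    · subst h; simp [charmatrix_apply_eq]
    · simp [charmatrix_apply_ne _ _ _ h, Matrix.diagonal_apply_ne _ h]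
  rw [Matrix.charpoly, this, Matrix.det_diagonal]

lemma charpoly_unitary_conj {m : ℕ} (U : Matrix.unitaryGroup (Fin m) ℂ)
    (D : Matrix (Fin m) (Fin m) ℂ) :
    ((U : Matrix (Fin m) (Fin m) ℂ) * D * (star U : Matrix (Fin m) (Fin m) ℂ)).charpoly
      = D.charpoly := by
  have hUV : (U : Matrix (Fin m) (Fin m) ℂ) * (star U : Matrix (Fin m) (Fin m) ℂ) = 1 := U.2.2
  set U' : Matrix (Fin m) (Fin m) ℂ[X] := C.mapMatrix (U : Matrix (Fin m) (Fin m) ℂ) with hU'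
  set V' : Matrix (Fin m) (Fin m) ℂ[X] := C.mapMatrix (star U : Matrix (Fin m) (Fin m) ℂ) with hV'
  have hUV' : U' * V' = 1 := by rw [hU', hV', ← _root_.map_mul, hUV, _root_.map_one]
  have key : charmatrix ((U : Matrix (Fin m) (Fin m) ℂ) * D * (star U : Matrix (Fin m) (Fin m) ℂ))
      = U' * charmatrix D * V' := by
    unfold charmatrix
    rw [_root_.map_mul, _root_.map_mul, mul_sub, sub_mul]
    congr 1
    have hc : Matrix.scalar (Fin m) (X : ℂ[X]) * V' = V' * Matrix.scalar (Fin m) (X : ℂ[X]) :=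
      (Matrix.scalar_commute _ (fun r => Commute.all _ _) _).eq
    rw [mul_assoc, hc, ← mul_assoc, hUV', one_mul]
  rw [Matrix.charpoly, key, Matrix.det_mul, Matrix.det_mul, Matrix.charpoly]
  have : U'.det * V'.det = 1 := by rw [← Matrix.det_mul, hUV', Matrix.det_one]
  calc U'.det * (charmatrix D).det * V'.det
      = (charmatrix D).det * (U'.det * V'.det) := by ring
    _ = (charmatrix D).det := by rw [this, mul_one]

lemma unitary_conj_pow {m : ℕ} (U : Matrix.unitaryGroup (Fin m) ℂ)
    (D : Matrix (Fin m) (Fin m) ℂ) (k : ℕ) :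
    ((U : Matrix (Fin m) (Fin m) ℂ) * D * (star U : Matrix (Fin m) (Fin m) ℂ)) ^ k
      = (U : Matrix (Fin m) (Fin m) ℂ) * D ^ k * (star U : Matrix (Fin m) (Fin m) ℂ) := by
  induction k with
  | zero => simp [U.2.2]
  | succ k ih =>
      rw [pow_succ, ih, pow_succ]
      have hVU : (star U : Matrix (Fin m) (Fin m) ℂ) * (U : Matrix (Fin m) (Fin m) ℂ) = 1 := U.2.1
      calc (U : Matrix (Fin m) (Fin m) ℂ) * D ^ k * (star U : Matrix (Fin m) (Fin m) ℂ) *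
            ((U : Matrix (Fin m) (Fin m) ℂ) * D * (star U : Matrix (Fin m) (Fin m) ℂ))
          = (U : Matrix (Fin m) (Fin m) ℂ) * D ^ k *
            ((star U : Matrix (Fin m) (Fin m) ℂ) * (U : Matrix (Fin m) (Fin m) ℂ)) * D *
            (star U : Matrix (Fin m) (Fin m) ℂ) := by
            simp only [mul_assoc]
        _ = (U : Matrix (Fin m) (Fin m) ℂ) * (D ^ k * D) * (star U : Matrix (Fin m) (Fin m) ℂ) := by
            rw [hVU, mul_one]; simp only [mul_assoc]

lemma trace_pow_eq_sum_eigs {m : ℕ} {A : Matrix (Fin m) (Fin m) ℂ} (hA : A.IsHermitian)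
    (k : ℕ) : (A ^ k).trace = ∑ i, (hA.eigenvalues i : ℂ) ^ k := by
  conv_lhs => rw [hA.spectral_theorem, Unitary.conjStarAlgAut_apply]
  rw [unitary_conj_pow, Matrix.trace_mul_cycle,
    show (star (hA.eigenvectorUnitary : Matrix (Fin m) (Fin m) ℂ)) *
      (hA.eigenvectorUnitary : Matrix (Fin m) (Fin m) ℂ) = 1 from hA.eigenvectorUnitary.2.1,
    one_mul, Matrix.diagonal_pow, Matrix.trace_diagonal]
  simp

lemma charpoly_eq_prod_eigs {m : ℕ} {A : Matrix (Fin m) (Fin m) ℂ} (hA : A.IsHermitian) :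
    A.charpoly = ∏ i, (X - C (hA.eigenvalues i : ℂ)) := by
  conv_lhs => rw [hA.spectral_theorem, Unitary.conjStarAlgAut_apply]
  rw [charpoly_unitary_conj, charpoly_diagonal']
  rfl

open MvPolynomial in
open Finset in
lemma esymm_eq_of_psum_eq {m : ℕ} (d e : Fin m → ℂ)
    (h : ∀ k, 1 ≤ k → k ≤ m → ∑ i, d i ^ k = ∑ i, e i ^ k) (k : ℕ) :
    (Finset.univ.val.map d).esymm k = (Finset.univ.val.map e).esymm k := by
  induction k using Nat.strong_induction_on with
  | _ k ih =>
  rcases Nat.eq_zero_or_pos k with rfl | hk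
  · simp [Multiset.esymm]
  rcases le_or_gt k m with hkm | hkm
  swap
  · rw [Multiset.esymm, Multiset.esymm, Multiset.powersetCard_eq_empty _ (by simpa using hkm),
      Multiset.powersetCard_eq_empty _ (by simpa using hkm)]
  · have hid := MvPolynomial.psum_eq_mul_esymm_sub_sum (Fin m) ℂ k hk
    simp only [MvPolynomial.psum] at hid
    have hd := congrArg (MvPolynomial.aeval d) hid
    have he := congrArg (MvPolynomial.aeval e) hid
    simp only [map_sub, _root_.map_mul, map_pow, map_neg, _root_.map_one, map_natCast, map_sum,
      MvPolynomial.aeval_X, MvPolynomial.aeval_esymm_eq_multiset_esymm] at hd he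
    rw [h k hk hkm] at hd
    have hsum : ∀ a ∈ {a ∈ Finset.HasAntidiagonal.antidiagonal k | a.1 ∈ Set.Ioo 0 k},
        (-1 : ℂ) ^ a.1 * (Finset.univ.val.map d).esymm a.1 * ∑ i, d i ^ a.2
        = (-1 : ℂ) ^ a.1 * (Finset.univ.val.map e).esymm a.1 * ∑ i, e i ^ a.2 := by
      intro a ha
      simp only [Finset.mem_filter, Finset.HasAntidiagonal.mem_antidiagonal, Set.mem_Ioo] at ha
      rw [ih a.1 ha.2.2, h a.2 (by omega) (by omega)]
    rw [Finset.sum_congr rfl hsum] at hd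
    have hcancel : (-1 : ℂ) ^ (k + 1) * k * (Finset.univ.val.map d).esymm k
        = (-1 : ℂ) ^ (k + 1) * k * (Finset.univ.val.map e).esymm k :=
      sub_left_injective (hd.symm.trans he)
    have hne : ((-1 : ℂ) ^ (k + 1) * k) ≠ 0 := by
      apply mul_ne_zero (pow_ne_zero _ (by norm_num))
      exact_mod_cast Nat.cast_ne_zero.mpr (by omega)
    exact mul_left_cancel₀ hne hcancel

lemma prod_X_sub_C_eq_of_esymm {m : ℕ} (d e : Fin m → ℂ)
    (hsm : ∀ k, (Finset.univ.val.map d).esymm k = (Finset.univ.val.map e).esymm k) :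
    (∏ i, (X - C (d i)) : ℂ[X]) = ∏ i, (X - C (e i)) := by
  have hrw : ∀ f : Fin m → ℂ, (∏ i, (X - C (f i)) : ℂ[X])
      = ((Finset.univ.val.map f).map (fun r => X - C r)).prod := by
    intro f
    rw [Multiset.map_map]
    rfl
  rw [hrw, hrw]
  ext j
  rcases le_or_gt j m with hj | hj
  · rw [Multiset.prod_X_sub_C_coeff _ (by simpa using hj),
      Multiset.prod_X_sub_C_coeff _ (by simpa using hj)]
    rw [Multiset.card_map, Multiset.card_map, hsm]
  · rw [Polynomial.coeff_eq_zero_of_natDegree_lt, Polynomial.coeff_eq_zero_of_natDegree_lt] <;>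
      rw [Polynomial.natDegree_multiset_prod_X_sub_C_eq_card] <;> simpa using hj

lemma charpoly_eq_of_trace_pow {m : ℕ} {A A' : Matrix (Fin m) (Fin m) ℂ} (hA : A.IsHermitian)
    (hA' : A'.IsHermitian) (h : ∀ k, 1 ≤ k → k ≤ m → (A ^ k).trace = (A' ^ k).trace) :
    A.charpoly = A'.charpoly := by
  rw [charpoly_eq_prod_eigs hA, charpoly_eq_prod_eigs hA']
  apply prod_X_sub_C_eq_of_esymm
  apply esymm_eq_of_psum_eq
  intro k h1 h2
  have := h k h1 h2
  rwa [trace_pow_eq_sum_eigs hA, trace_pow_eq_sum_eigs hA'] at this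

lemma add_pow_words {R : Type*} [Ring R] (X Y : R) (k : ℕ) :
    (X + Y) ^ k = ∑ w : Fin k → Bool, (List.ofFn fun j => if w j then Y else X).prod := by
  induction k with
  | zero =>
      simp [List.ofFn_zero]
  | succ k ih =>
      rw [pow_succ', ih, Finset.mul_sum]
      rw [← (Fin.consEquiv (fun _ : Fin (k+1) => Bool)).sum_comp
        (fun w : Fin (k+1) → Bool => (List.ofFn fun j => if w j then Y else X).prod)]
      rw [Fintype.sum_prod_type]
      simp only [Fin.consEquiv_apply, List.ofFn_succ, Fin.cons_zero, Fin.cons_succ,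
        List.prod_cons, Fintype.sum_bool, if_true, if_false]
      rw [← Finset.sum_add_distrib]
      apply Finset.sum_congr rfl
      intro w _
      rw [add_mul, add_comm]
      norm_num

lemma ofFn_smul_prod {m k : ℕ} (f : Fin k → ℂ) (M : Fin k → Matrix (Fin m) (Fin m) ℂ) :
    (List.ofFn fun j => f j • M j).prod = (∏ j, f j) • (List.ofFn M).prod := by
  induction k with
  | zero => simp
  | succ k ih =>
      rw [List.ofFn_succ, List.prod_cons, ih (fun j => f j.succ) (fun j => M j.succ),
        List.ofFn_succ, List.prod_cons, Fin.prod_univ_succ, smul_mul_smul_comm]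

lemma wordProd_conjTranspose {n k : ℕ} (B : Matrix (Fin n) (Fin n) ℂ) (w : Fin k → Bool) :
    (wordProd B w)ᴴ = wordProd B (fun j => ! w (Fin.rev j)) := by
  unfold wordProd
  rw [Matrix.conjTranspose_list_prod, List.map_ofFn, ofFn_reverse]
  apply congrArg
  apply congrArg List.ofFn
  funext i
  rcases h : w (Fin.rev i) with hf | ht <;> simp [Function.comp, h]

lemma card_rev_compl {k l : ℕ} (w : Fin k → Bool)
    (hw : (Finset.univ.filter fun j => w j = true).card = l) :
    (Finset.univ.filter fun j => (! w (Fin.rev j)) = true).card = k - l := by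
  have h1 : (Finset.univ.filter fun j => (! w (Fin.rev j)) = true)
      = (Finset.univ.filter fun j => w (Fin.rev j) = false) := by
    apply Finset.filter_congr; intro j _; simp
  have h2 : (Finset.univ.filter fun j => w (Fin.rev j) = false).card
      = (Finset.univ.filter fun j => w j = false).card := by
    apply Finset.card_nbij (fun j => Fin.rev j)
    · intro a ha; simpa using (by simpa using ha : w (Fin.rev a) = false)
    · intro a ha b hb hab; exact Fin.rev_injective hab
    · intro a ha
      refine ⟨Fin.rev a, by simpa using (by simpa using ha : w a = false), by simp⟩
  have h3 : (Finset.univ.filter fun j => w j = false).card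
      + (Finset.univ.filter fun j => w j = true).card = k := by
    have := Finset.card_filter_add_card_filter_not
      (s := (Finset.univ : Finset (Fin k))) (p := fun j => w j = true)
    simp only [Finset.card_univ, Fintype.card_fin] at this
    have h4 : (Finset.univ.filter fun j => ¬ w j = true)
        = (Finset.univ.filter fun j => w j = false) := by
      apply Finset.filter_congr; intro j _; simp
    rw [h4] at this
    omega
  rw [h1, h2]; omega

/-- The sum of traces of words with `l` appearances of `Bᴴ` among `k` letters. -/
noncomputable def Sw (n : ℕ) (B : Matrix (Fin n) (Fin n) ℂ) (k l : ℕ) : ℂ :=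
  ∑ w ∈ Finset.univ.filter
      (fun w : Fin k → Bool => (Finset.univ.filter fun j => w j = true).card = l),
    (wordProd B w).trace

lemma Sw_conj {n k l : ℕ} (B : Matrix (Fin n) (Fin n) ℂ) (hl : l ≤ k) :
    Sw n B k (k - l) = starRingEnd ℂ (Sw n B k l) := by
  unfold Sw
  rw [map_sum]
  refine Finset.sum_nbij' (i := fun w => fun j => ! w (Fin.rev j))
    (j := fun w => fun j => ! w (Fin.rev j)) ?_ ?_ ?_ ?_ ?_
  · intro w hw
    simp only [Finset.mem_filter, Finset.mem_univ, true_and] at hw ⊢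
    rw [card_rev_compl w hw]
    omega
  · intro w hw
    simp only [Finset.mem_filter, Finset.mem_univ, true_and] at hw ⊢
    rw [card_rev_compl w hw]
  · intro w _
    funext j
    simp
  · intro w _
    funext j
    simp
  · intro w hw
    simp only [← wordProd_conjTranspose, Matrix.trace_conjTranspose, Complex.star_def,
      Complex.conj_conj]

lemma LB_eq {n : ℕ} (B : Matrix (Fin n) (Fin n) ℂ) (t : ℝ) :
    LB B t = (1/2 : ℂ) • (((Real.cos t : ℂ) - (Real.sin t : ℂ) * Complex.I) • B
      + ((Real.cos t : ℂ) + (Real.sin t : ℂ) * Complex.I) • Bᴴ) := by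
  have hI : (1 / (2 * Complex.I) : ℂ) = -Complex.I / 2 := by
    rw [div_eq_div_iff (by simp [Complex.I_ne_zero]) two_ne_zero]
    linear_combination 2*Complex.I_mul_I
  unfold LB reM imM
  rw [hI]
  module

lemma LB_isHermitian {n : ℕ} (B : Matrix (Fin n) (Fin n) ℂ) (t : ℝ) :
    (LB B t).IsHermitian := by
  rw [Matrix.IsHermitian, LB_eq]
  simp only [Matrix.conjTranspose_smul, Matrix.conjTranspose_add,
    Matrix.conjTranspose_conjTranspose, Complex.star_def, map_sub, map_add, _root_.map_mul,
    map_div₀, _root_.map_one, map_ofNat, Complex.conj_ofReal, Complex.conj_I]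
  rw [add_comm]
  ring_nf

lemma trace_LB_pow {n : ℕ} (B : Matrix (Fin n) (Fin n) ℂ) (t : ℝ) (k : ℕ) :
    ((LB B t) ^ k).trace = (1/2 : ℂ) ^ k * ∑ l ∈ Finset.range (k+1),
      (((Real.cos t : ℂ) - (Real.sin t : ℂ) * Complex.I) ^ (k - l)
        * ((Real.cos t : ℂ) + (Real.sin t : ℂ) * Complex.I) ^ l) * Sw n B k l := by
  set a := ((Real.cos t : ℂ) - (Real.sin t : ℂ) * Complex.I) with ha
  set c := ((Real.cos t : ℂ) + (Real.sin t : ℂ) * Complex.I) with hc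
  rw [LB_eq, _root_.smul_pow, Matrix.trace_smul, smul_eq_mul]
  congr 1
  rw [add_pow_words (a • B) (c • Bᴴ) k, Matrix.trace_sum]
  have hterm : ∀ w : Fin k → Bool,
      ((List.ofFn fun j => if w j then c • Bᴴ else a • B).prod).trace
      = (a ^ (k - (Finset.univ.filter fun j => w j = true).card)
          * c ^ (Finset.univ.filter fun j => w j = true).card) * (wordProd B w).trace := by
    intro w
    have hsplit : (fun j => if w j then c • Bᴴ else a • B)
        = fun j => (if w j then c else a) • (if w j then Bᴴ else B) := by
      funext j
      rcases w j <;> simp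
    rw [hsplit, ofFn_smul_prod]
    rw [Matrix.trace_smul, smul_eq_mul]
    congr 1
    rw [Finset.prod_ite, Finset.prod_const, Finset.prod_const]
    have hcard : (Finset.univ.filter fun j => ¬ w j = true).card
        = k - (Finset.univ.filter fun j => w j = true).card := by
      have := Finset.card_filter_add_card_filter_not
        (s := (Finset.univ : Finset (Fin k))) (p := fun j => w j = true)
      simp only [Finset.card_univ, Fintype.card_fin] at this
      omega
    rw [hcard, mul_comm]
  rw [Finset.sum_congr rfl (fun w _ => hterm w)]
  have hmaps : ∀ w : Fin k → Bool, w ∈ (Finset.univ : Finset (Fin k → Bool)) →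
      (Finset.univ.filter fun j => w j = true).card ∈ Finset.range (k+1) := by
    intro w _
    rw [Finset.mem_range, Nat.lt_succ_iff]
    simpa using Finset.card_filter_le Finset.univ (fun j => w j = true)
  rw [← Finset.sum_fiberwise_of_maps_to hmaps
    (fun w : Fin k → Bool => (((Real.cos t : ℂ) - (Real.sin t : ℂ) * Complex.I)
        ^ (k - (Finset.univ.filter fun j => w j = true).card)
      * ((Real.cos t : ℂ) + (Real.sin t : ℂ) * Complex.I)
        ^ (Finset.univ.filter fun j => w j = true).card) * (wordProd B w).trace)]
  apply Finset.sum_congr rfl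
  intro l _
  rw [Sw, Finset.mul_sum]
  apply Finset.sum_congr rfl
  intro w hw
  simp only [Finset.mem_filter] at hw
  rw [hw.2]

lemma sin_cos_mul {t : ℝ} :
    ((Real.cos t : ℂ) - (Real.sin t : ℂ) * Complex.I)
      * ((Real.cos t : ℂ) + (Real.sin t : ℂ) * Complex.I) = 1 := by
  have h1 : (Real.sin t : ℂ) ^ 2 + (Real.cos t : ℂ) ^ 2 = 1 := by
    exact_mod_cast congrArg (Complex.ofReal) (Real.sin_sq_add_cos_sq t)
  linear_combination h1 - (Real.sin t : ℂ) ^ 2 * Complex.I_mul_I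

end Auxiliary

/-- the vanishing of the sums of traces of words with `l` appearances of `Bᴴ`
among `k` letters, whenever `2l < k ≤ n`, implies isospectrality of the pencil. -/
theorem word_trace_sums_zero_implies_isospectral (n : ℕ) (B : Matrix (Fin n) (Fin n) ℂ)
    (h : ∀ k l : ℕ, 1 ≤ k → k ≤ n → 2 * l < k →
      ∑ w ∈ Finset.univ.filter
          (fun w : Fin k → Bool => (Finset.univ.filter fun j => w j = true).card = l),
        (wordProd B w).trace = 0) :
    Isospectral B := by
  intro s t
  apply charpoly_eq_of_trace_pow (LB_isHermitian B s) (LB_isHermitian B t)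
  intro k hk1 hkn
  have hS : ∀ l : ℕ, l ≤ k → 2 * l ≠ k → Sw n B k l = 0 := by
    intro l hl hne
    rcases lt_or_gt_of_ne hne with hlt | hgt
    · exact h k l hk1 hkn hlt
    · have h1 : Sw n B k (k - l) = 0 := h k (k - l) hk1 hkn (by omega)
      have h2 : l = k - (k - l) := by omega
      rw [h2, Sw_conj B (by omega : k - l ≤ k), h1, map_zero]
  rw [trace_LB_pow, trace_LB_pow]
  congr 1
  apply Finset.sum_congr rfl
  intro l hl
  have hlk : l ≤ k := by simpa [Nat.lt_succ_iff] using Finset.mem_range.mp hl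
  by_cases h2l : 2 * l = k
  · have hkl : k - l = l := by omega
    rw [hkl, ← mul_pow, ← mul_pow, sin_cos_mul, sin_cos_mul]
  · rw [hS l hlk h2l, mul_zero, mul_zero]
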